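/- arXiv:1608.01384 — 3 statements merged into one kernel-verified Lean document; each statement's English description precedes it below -/
import Mathlib

section
/- Let φ : (0,∞) → (0,∞) be nondecreasing and suppose there exist a > 0 and β ∈ (0,2) with a·λ^β·φ(t) ≤ φ(λ·t) for all λ ≥ 1 and t ≥ 1. Then for every R ∈ (0,1], the Lebesgue integral ∫₀^R 1/(s·φ(s⁻²)) ds is at most 1/(2·a·β) · 1/φ(R⁻²). -/
open MeasureTheory

/-- The integral estimate `∫₀^R (s φ(s⁻²))⁻¹ ds ≤ (2aβ)⁻¹ φ(R⁻²)⁻¹` under the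
lower scaling condition (H1). -/
theorem integral_inv_s_phi_bound (φ : ℝ → ℝ) (a β : ℝ)
    (hpos : ∀ t : ℝ, 0 < t → 0 < φ t)
    (hmono : MonotoneOn φ (Set.Ioi (0 : ℝ)))
    (ha : 0 < a) (hβ : β ∈ Set.Ioo (0 : ℝ) 2)
    (hscal : ∀ lam t : ℝ, 1 ≤ lam → 1 ≤ t → a * lam ^ β * φ t ≤ φ (lam * t)) :
    ∀ R : ℝ, R ∈ Set.Ioc (0 : ℝ) 1 →
      (∫⁻ s in Set.Ioo (0 : ℝ) R, ENNReal.ofReal (1 / (s * φ ((s ^ 2)⁻¹)))) ≤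
        ENNReal.ofReal (1 / (2 * a * β) * (1 / φ ((R ^ 2)⁻¹))) := by
  intro R hR
  obtain ⟨hR0, hR1⟩ := hR
  have hβ0 : 0 < β := hβ.1
  have hR2 : (0:ℝ) < R ^ 2 := by positivity
  have hφR : 0 < φ ((R ^ 2)⁻¹) := hpos _ (by positivity)
  have hRb : (0:ℝ) < R ^ (2 * β) := Real.rpow_pos_of_pos hR0 _
  set c : ℝ := 1 / (a * φ ((R ^ 2)⁻¹) * R ^ (2 * β)) with hc
  have hc0 : 0 < c := by
    apply one_div_pos.mpr; positivity
  -- pointwise bound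
  have key : ∀ s ∈ Set.Ioo (0:ℝ) R,
      ENNReal.ofReal (1 / (s * φ ((s ^ 2)⁻¹))) ≤
      ENNReal.ofReal (c * s ^ (2 * β - 1)) := by
    intro s hs
    obtain ⟨hs0, hsR⟩ := hs
    have hs2 : (0:ℝ) < s ^ 2 := by positivity
    have hφs : 0 < φ ((s ^ 2)⁻¹) := hpos _ (by positivity)
    apply ENNReal.ofReal_le_ofReal
    -- scaling
    have hlam : (1:ℝ) ≤ (R / s) ^ 2 := by
      have : (1:ℝ) ≤ R / s := (one_le_div hs0).mpr hsR.le
      nlinarith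
    have ht : (1:ℝ) ≤ (R ^ 2)⁻¹ := by
      rw [le_inv_comm₀ one_pos hR2]; nlinarith
    have hsc := hscal ((R / s) ^ 2) ((R ^ 2)⁻¹) hlam ht
    have heq : (R / s) ^ 2 * (R ^ 2)⁻¹ = (s ^ 2)⁻¹ := by
      field_simp
    rw [heq] at hsc
    have hrpow : ((R / s) ^ 2 : ℝ) ^ β = R ^ (2 * β) / s ^ (2 * β) := by
      have h1 : ((R / s) ^ 2 : ℝ) = (R / s) ^ ((2:ℕ):ℝ) := (Real.rpow_natCast _ 2).symm
      rw [h1, ← Real.rpow_mul (by positivity)]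
      norm_num [Real.div_rpow hR0.le hs0.le]
    rw [hrpow] at hsc
    -- hsc : a * (R^(2β)/s^(2β)) * φ(R⁻²) ≤ φ(s⁻²)
    have hsb : (0:ℝ) < s ^ (2 * β) := Real.rpow_pos_of_pos hs0 _
    have hmain : a * R ^ (2 * β) * φ ((R ^ 2)⁻¹) ≤ s ^ (2 * β) * φ ((s ^ 2)⁻¹) := by
      calc a * R ^ (2 * β) * φ ((R ^ 2)⁻¹)
          = s ^ (2 * β) * (a * (R ^ (2 * β) / s ^ (2 * β)) * φ ((R ^ 2)⁻¹)) := by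
            field_simp
        _ ≤ s ^ (2 * β) * φ ((s ^ 2)⁻¹) := by
            apply mul_le_mul_of_nonneg_left hsc hsb.le
    have hspow : s ^ (2 * β - 1) * s = s ^ (2 * β) := by
      rw [← Real.rpow_add_one hs0.ne' (2 * β - 1)]
      congr 1
      ring
    rw [hc, div_mul_eq_mul_div, one_mul, div_le_div_iff₀ (by positivity) (by positivity)]
    calc 1 * (a * φ ((R ^ 2)⁻¹) * R ^ (2 * β))
        = a * R ^ (2 * β) * φ ((R ^ 2)⁻¹) := by ring
      _ ≤ s ^ (2 * β) * φ ((s ^ 2)⁻¹) := hmain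
      _ = s ^ (2 * β - 1) * (s * φ ((s ^ 2)⁻¹)) := by rw [← hspow]; ring
  calc (∫⁻ s in Set.Ioo (0 : ℝ) R, ENNReal.ofReal (1 / (s * φ ((s ^ 2)⁻¹))))
      ≤ ∫⁻ s in Set.Ioo (0 : ℝ) R, ENNReal.ofReal (c * s ^ (2 * β - 1)) :=
        setLIntegral_mono' measurableSet_Ioo key
    _ = ENNReal.ofReal (∫ s in Set.Ioo (0 : ℝ) R, c * s ^ (2 * β - 1)) := by
        rw [← ofReal_integral_eq_lintegral_ofReal]
        · -- integrability
          apply Integrable.const_mul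
          have h1 : IntervalIntegrable (fun s : ℝ => s ^ (2 * β - 1)) volume 0 R :=
            intervalIntegral.intervalIntegrable_rpow' (by linarith)
          have h2 := (intervalIntegrable_iff_integrableOn_Ioc_of_le hR0.le).mp h1
          exact h2.mono_set Set.Ioo_subset_Ioc_self
        · filter_upwards [ae_restrict_mem measurableSet_Ioo] with s hs
          have : (0:ℝ) < s := hs.1
          positivity
    _ ≤ ENNReal.ofReal (1 / (2 * a * β) * (1 / φ ((R ^ 2)⁻¹))) := by
        apply ENNReal.ofReal_le_ofReal
        rw [integral_const_mul]
        have hIoo : ∫ s in Set.Ioo (0 : ℝ) R, s ^ (2 * β - 1) =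
            ∫ s in (0:ℝ)..R, s ^ (2 * β - 1) := by
          rw [intervalIntegral.integral_of_le hR0.le,
            MeasureTheory.integral_Ioc_eq_integral_Ioo]
        rw [hIoo, integral_rpow (Or.inl (by linarith))]
        have h0 : (0:ℝ) ^ (2 * β - 1 + 1) = 0 := by
          rw [Real.zero_rpow (by linarith)]
        rw [h0, sub_zero]
        have hle : c * (R ^ (2 * β - 1 + 1) / (2 * β - 1 + 1)) =
            1 / (2 * a * β) * (1 / φ ((R ^ 2)⁻¹)) := by
          have he : 2 * β - 1 + 1 = 2 * β := by ring
          rw [he, hc, div_mul_div_comm, div_mul_div_comm, one_mul, one_mul,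
            div_eq_div_iff (ne_of_gt (by positivity)) (ne_of_gt (by positivity))]
          ring
        rw [hle]
end

section
/- Let n ≥ 1 be a natural number and let φ : (0,∞) → (0,∞) be nondecreasing and satisfy a·λ^β·φ(t) ≤ φ(λ·t) for all λ ≥ 1 and t ≥ 1, where a > 0 and β ∈ (0,2). Then for every point v in Euclidean space ℝⁿ and every ρ ∈ (0,1], the Lebesgue integral over the open ball B(v,ρ) of the function y ↦ 1/( φ(|v−y|⁻²)·|v−y|ⁿ ) is at most (n·ωₙ)/(2·a·β) · 1/φ(ρ⁻²), where ωₙ denotes the Lebesgue volume of the unit ball in ℝⁿ. -/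
open MeasureTheory
open scoped ENNReal

open Measure Set Metric in
open scoped ENNReal in
private lemma lintegral_fun_norm_addHaar' {E : Type*} [NormedAddCommGroup E] [NormedSpace ℝ E]
    [MeasurableSpace E] [BorelSpace E] [Nontrivial E] (μ : Measure E) [FiniteDimensional ℝ E]
    [μ.IsAddHaarMeasure] (f : ℝ → ℝ≥0∞) (hf : Measurable f) :
    ∫⁻ x, f ‖x‖ ∂μ = (Module.finrank ℝ E) * μ (ball 0 1) *
      ∫⁻ y in Ioi (0 : ℝ), ENNReal.ofReal (y ^ (Module.finrank ℝ E - 1)) * f y := by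
  have hms : MeasurableSet ({(0 : E)}ᶜ) := (measurableSet_singleton 0).compl
  have hmeas : Measurable fun p : sphere (0 : E) 1 × Ioi (0 : ℝ) => f p.2 :=
    hf.comp (measurable_subtype_coe.comp measurable_snd)
  calc
    ∫⁻ x, f ‖x‖ ∂μ = ∫⁻ x in {(0 : E)}ᶜ, f ‖x‖ ∂μ := by
      rw [restrict_compl_singleton]
    _ = ∫⁻ x : ({(0 : E)}ᶜ : Set E), f ‖x.1‖ ∂(μ.comap (↑)) :=
      (lintegral_subtype_comap hms fun x => f ‖x‖).symm
    _ = ∫⁻ x : ({(0 : E)}ᶜ : Set E), f ((homeomorphUnitSphereProd E x).2 : ℝ) ∂(μ.comap (↑)) :=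
      lintegral_congr (by simp)
    _ = ∫⁻ p : sphere (0 : E) 1 × Ioi (0 : ℝ), f p.2
          ∂(μ.toSphere.prod (volumeIoiPow (Module.finrank ℝ E - 1))) :=
      μ.measurePreserving_homeomorphUnitSphereProd.lintegral_comp hmeas
    _ = μ.toSphere univ * ∫⁻ r : Ioi (0 : ℝ), f r ∂(volumeIoiPow (Module.finrank ℝ E - 1)) := by
      rw [lintegral_prod _ hmeas.aemeasurable]
      simp [lintegral_const, mul_comm]
    _ = (Module.finrank ℝ E) * μ (ball 0 1) *
          ∫⁻ r : Ioi (0 : ℝ), f r ∂(volumeIoiPow (Module.finrank ℝ E - 1)) := by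
      rw [μ.toSphere_apply_univ]
    _ = _ := by
      congr 1
      have hg : Measurable fun r : Ioi (0:ℝ) => f ↑r := hf.comp measurable_subtype_coe
      rw [Measure.volumeIoiPow, lintegral_withDensity_eq_lintegral_mul _
        ((measurable_subtype_coe.pow_const _).ennreal_ofReal) hg,
        ← lintegral_subtype_comap measurableSet_Ioi
          (fun y : ℝ => ENNReal.ofReal (y ^ (Module.finrank ℝ E - 1)) * f y)]
      rfl

set_option maxHeartbeats 1000000 in
/-- Polar-coordinate estimate: `∫_{B(v,ρ)} (φ(|v−y|⁻²)|v−y|ⁿ)⁻¹ dy ≤ (n ωₙ)/(2aβ) · φ(ρ⁻²)⁻¹`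
under the lower scaling condition (H1). -/
theorem ball_integral_inv_phi_bound (n : ℕ) (hn : 1 ≤ n) (φ : ℝ → ℝ) (a β : ℝ)
    (hpos : ∀ t : ℝ, 0 < t → 0 < φ t)
    (hmono : MonotoneOn φ (Set.Ioi (0 : ℝ)))
    (ha : 0 < a) (hβ : β ∈ Set.Ioo (0 : ℝ) 2)
    (hscal : ∀ lam t : ℝ, 1 ≤ lam → 1 ≤ t → a * lam ^ β * φ t ≤ φ (lam * t)) :
    ∀ (v : EuclideanSpace ℝ (Fin n)) (ρ : ℝ), ρ ∈ Set.Ioc (0 : ℝ) 1 →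
      (∫⁻ y in Metric.ball v ρ,
          ENNReal.ofReal (1 / (φ ((dist v y ^ 2)⁻¹) * dist v y ^ n))) ≤
        ENNReal.ofReal
          ((n * (volume (Metric.ball (0 : EuclideanSpace ℝ (Fin n)) 1)).toReal) /
              (2 * a * β) * (1 / φ ((ρ ^ 2)⁻¹))) := by
  intro v ρ hρ
  obtain ⟨hρ0, hρ1⟩ := hρ
  haveI : Nonempty (Fin n) := ⟨⟨0, hn⟩⟩
  haveI : Nontrivial (EuclideanSpace ℝ (Fin n)) := inferInstance
  obtain ⟨hβ0, hβ2⟩ := hβ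
  have hφρ : 0 < φ ((ρ ^ 2)⁻¹) := hpos _ (by positivity)
  set C : ℝ := 1 / (a * φ ((ρ ^ 2)⁻¹) * ρ ^ (2 * β)) with hC
  have hP : (0:ℝ) < ρ ^ (2 * β) := Real.rpow_pos_of_pos hρ0 _
  have hCpos : 0 < C := by positivity
  set f₀ : ℝ → ℝ≥0∞ := fun d => ENNReal.ofReal (1 / (φ ((d ^ 2)⁻¹) * d ^ n)) with hf₀
  set H : ℝ → ℝ≥0∞ := fun r =>
    if r ∈ Set.Ioo (0:ℝ) ρ then ENNReal.ofReal (C * r ^ (2 * β) / r ^ n) else 0 with hHdef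
  have hH : Measurable H := by
    refine Measurable.ite measurableSet_Ioo ?_ measurable_const
    fun_prop
  -- Step A: translate to a ball centered at the origin
  have hA : (∫⁻ y in Metric.ball v ρ, f₀ (dist v y)) = ∫⁻ x in Metric.ball (0 : EuclideanSpace ℝ (Fin n)) ρ, f₀ ‖x‖ := by
    have hmp : MeasurePreserving (fun x : EuclideanSpace ℝ (Fin n) => v + x) volume volume :=
      measurePreserving_add_left volume v
    have h1 := hmp.setLIntegral_comp_preimage_emb
      (MeasurableEquiv.addLeft v).measurableEmbedding (fun y => f₀ (dist v y))
      (Metric.ball v ρ)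
    have h2 : (fun x : EuclideanSpace ℝ (Fin n) => v + x) ⁻¹' Metric.ball v ρ = Metric.ball (0 : EuclideanSpace ℝ (Fin n)) ρ := by
      ext x
      simp [Metric.mem_ball, dist_eq_norm]
    have h3 : ∀ x : EuclideanSpace ℝ (Fin n), f₀ (dist v (v + x)) = f₀ ‖x‖ := by
      intro x; congr 1; simp [dist_eq_norm]
    rw [← h1, h2]
    exact lintegral_congr fun x => h3 x
  -- Step B: pointwise bound
  have hB : (∫⁻ x in Metric.ball (0 : EuclideanSpace ℝ (Fin n)) ρ, f₀ ‖x‖) ≤ ∫⁻ x : EuclideanSpace ℝ (Fin n), H ‖x‖ := by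
    refine le_trans (setLIntegral_mono (hH.comp measurable_norm) ?_)
      (setLIntegral_le_lintegral _ _)
    intro x hx
    rcases eq_or_ne x 0 with rfl | hx0
    · have : f₀ ‖(0 : EuclideanSpace ℝ (Fin n))‖ = 0 := by
        simp [hf₀, zero_pow (by omega : n ≠ 0)]
      rw [this]; exact zero_le
    · have hd0 : 0 < ‖x‖ := norm_pos_iff.mpr hx0
      have hdρ : ‖x‖ < ρ := by simpa [mem_ball_zero_iff] using hx
      set d := ‖x‖ with hd
      have hmem : d ∈ Set.Ioo (0:ℝ) ρ := ⟨hd0, hdρ⟩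
      have hφd : 0 < φ ((d ^ 2)⁻¹) := hpos _ (by positivity)
      -- the scaling estimate
      have h1 : (1:ℝ) ≤ (ρ / d) ^ 2 := one_le_pow₀ ((one_le_div hd0).2 hdρ.le)
      have h2 : (1:ℝ) ≤ (ρ ^ 2)⁻¹ := by
        rw [le_inv_comm₀ one_pos (by positivity)]
        nlinarith
      have key := hscal _ _ h1 h2
      have heq : (ρ / d) ^ 2 * (ρ ^ 2)⁻¹ = (d ^ 2)⁻¹ := by
        field_simp
      rw [heq] at key
      have hrpow : ((ρ / d) ^ 2 : ℝ) ^ β = ρ ^ (2 * β) / d ^ (2 * β) := by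
        rw [← Real.rpow_natCast (ρ / d) 2, ← Real.rpow_mul (by positivity),
          Real.div_rpow hρ0.le hd0.le]
        norm_num
      rw [hrpow] at key
      -- conclude the pointwise inequality
      have hQ : (0:ℝ) < d ^ (2 * β) := Real.rpow_pos_of_pos hd0 _
      have hgoalR : 1 / (φ ((d ^ 2)⁻¹) * d ^ n) ≤ C * d ^ (2 * β) / d ^ n := by
        have hdn : (0:ℝ) < d ^ n := pow_pos hd0 n
        have hstep : 1 / φ ((d ^ 2)⁻¹) ≤ C * d ^ (2 * β) := by
          rw [div_le_iff₀ hφd, hC]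
          have key' : a * ρ ^ (2 * β) * φ ((ρ ^ 2)⁻¹) ≤ φ ((d ^ 2)⁻¹) * d ^ (2 * β) := by
            rw [← div_le_iff₀ hQ]
            calc a * ρ ^ (2 * β) * φ ((ρ ^ 2)⁻¹) / d ^ (2 * β)
                = a * (ρ ^ (2 * β) / d ^ (2 * β)) * φ ((ρ ^ 2)⁻¹) := by ring
              _ ≤ φ ((d ^ 2)⁻¹) := key
          have : a * φ ((ρ ^ 2)⁻¹) * ρ ^ (2 * β) ≤ φ ((d ^ 2)⁻¹) * d ^ (2 * β) := by
            nlinarith [key']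
          calc (1:ℝ) = (a * φ ((ρ ^ 2)⁻¹) * ρ ^ (2 * β)) *
              (1 / (a * φ ((ρ ^ 2)⁻¹) * ρ ^ (2 * β))) := by
                rw [mul_one_div, div_self (by positivity : a * φ ((ρ ^ 2)⁻¹) * ρ ^ (2 * β) ≠ 0)]
            _ ≤ (φ ((d ^ 2)⁻¹) * d ^ (2 * β)) *
              (1 / (a * φ ((ρ ^ 2)⁻¹) * ρ ^ (2 * β))) := by
                apply mul_le_mul_of_nonneg_right this (by positivity)
            _ = 1 / (a * φ ((ρ ^ 2)⁻¹) * ρ ^ (2 * β)) * d ^ (2 * β) * φ ((d ^ 2)⁻¹) := by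
                ring
        calc 1 / (φ ((d ^ 2)⁻¹) * d ^ n) = (1 / φ ((d ^ 2)⁻¹)) * (1 / d ^ n) := by
              rw [one_div_mul_one_div_rev]; ring_nf
          _ ≤ (C * d ^ (2 * β)) * (1 / d ^ n) :=
              mul_le_mul_of_nonneg_right hstep (by positivity)
          _ = C * d ^ (2 * β) / d ^ n := by ring
      have hHval : H d = ENNReal.ofReal (C * d ^ (2 * β) / d ^ n) := if_pos hmem
      show f₀ d ≤ H d
      rw [hHval]
      exact ENNReal.ofReal_le_ofReal hgoalR
  -- Step C: polar coordinates
  have hrank : Module.finrank ℝ (EuclideanSpace ℝ (Fin n)) = n := finrank_euclideanSpace_fin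
  have hC1 : (∫⁻ x : EuclideanSpace ℝ (Fin n), H ‖x‖) = (n : ℝ≥0∞) * volume (Metric.ball (0 : EuclideanSpace ℝ (Fin n)) 1) *
      ∫⁻ y in Set.Ioi (0:ℝ), ENNReal.ofReal (y ^ (n - 1)) * H y := by
    rw [lintegral_fun_norm_addHaar' volume H hH, hrank]
  -- Step D: compute the one-dimensional integral
  have hD : (∫⁻ y in Set.Ioi (0:ℝ), ENNReal.ofReal (y ^ (n - 1)) * H y) =
      ENNReal.ofReal (C * (ρ ^ (2 * β) / (2 * β))) := by
    have hind : ∀ y : ℝ, ENNReal.ofReal (y ^ (n - 1)) * H y =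
        Set.indicator (Set.Ioo (0:ℝ) ρ)
          (fun y => ENNReal.ofReal (y ^ (n - 1)) * ENNReal.ofReal (C * y ^ (2 * β) / y ^ n)) y := by
      intro y
      rw [hHdef]
      by_cases hy : y ∈ Set.Ioo (0:ℝ) ρ <;> simp [hy, Set.indicator_of_mem, Set.indicator_of_notMem]
    calc (∫⁻ y in Set.Ioi (0:ℝ), ENNReal.ofReal (y ^ (n - 1)) * H y)
        = ∫⁻ y in Set.Ioo (0:ℝ) ρ,
            ENNReal.ofReal (y ^ (n - 1)) * ENNReal.ofReal (C * y ^ (2 * β) / y ^ n) := by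
          simp_rw [hind]
          rw [lintegral_indicator measurableSet_Ioo, Measure.restrict_restrict measurableSet_Ioo,
            Set.inter_eq_left.mpr Set.Ioo_subset_Ioi_self]
      _ = ∫⁻ y in Set.Ioo (0:ℝ) ρ, ENNReal.ofReal (C * y ^ (2 * β - 1)) := by
          refine setLIntegral_congr_fun measurableSet_Ioo (fun y hy => ?_)
          obtain ⟨hy0, hyρ⟩ := hy
          rw [← ENNReal.ofReal_mul (by positivity)]
          congr 1
          have hyn : (y:ℝ) ^ n = y ^ (n - 1) * y := by
            rw [← pow_succ, Nat.sub_add_cancel hn]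
          rw [Real.rpow_sub hy0, Real.rpow_one, hyn]
          have hy1 : y ^ (n-1) ≠ 0 := pow_ne_zero _ hy0.ne'
          field_simp
      _ = ENNReal.ofReal (∫ y in Set.Ioo (0:ℝ) ρ, C * y ^ (2 * β - 1)) := by
          rw [← ofReal_integral_eq_lintegral_ofReal]
          · exact (((intervalIntegral.intervalIntegrable_rpow'
              (by linarith : (-1:ℝ) < 2 * β - 1)).1).mono_set
                Set.Ioo_subset_Ioc_self).const_mul C
          · filter_upwards [ae_restrict_mem measurableSet_Ioo] with y hy
            have := Real.rpow_nonneg hy.1.le (2 * β - 1)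
            positivity
      _ = ENNReal.ofReal (C * (ρ ^ (2 * β) / (2 * β))) := by
          congr 1
          rw [← MeasureTheory.integral_Ioc_eq_integral_Ioo,
            ← intervalIntegral.integral_of_le hρ0.le, intervalIntegral.integral_const_mul,
            integral_rpow (Or.inl (by linarith : (-1:ℝ) < 2 * β - 1))]
          have h21 : 2 * β - 1 + 1 = 2 * β := by ring
          rw [h21, Real.zero_rpow (by positivity : 2 * β ≠ 0), sub_zero]
  -- Step E: final arithmetic
  have hV : volume (Metric.ball (0 : EuclideanSpace ℝ (Fin n)) 1) ≠ ⊤ := measure_ball_lt_top.ne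
  calc (∫⁻ y in Metric.ball v ρ,
          ENNReal.ofReal (1 / (φ ((dist v y ^ 2)⁻¹) * dist v y ^ n)))
      = ∫⁻ x in Metric.ball (0 : EuclideanSpace ℝ (Fin n)) ρ, f₀ ‖x‖ := hA
    _ ≤ ∫⁻ x : EuclideanSpace ℝ (Fin n), H ‖x‖ := hB
    _ = (n : ℝ≥0∞) * volume (Metric.ball (0 : EuclideanSpace ℝ (Fin n)) 1) *
          ENNReal.ofReal (C * (ρ ^ (2 * β) / (2 * β))) := by rw [hC1, hD]
    _ = ENNReal.ofReal ((n * (volume (Metric.ball (0 : EuclideanSpace ℝ (Fin n)) 1)).toReal) / (2 * a * β) *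
          (1 / φ ((ρ ^ 2)⁻¹))) := by
        rw [← ENNReal.ofReal_natCast n, ← ENNReal.ofReal_toReal hV,
          ← ENNReal.ofReal_mul (by positivity), ← ENNReal.ofReal_mul (by positivity)]
        congr 1
        have hVt0 : 0 ≤ (volume (Metric.ball (0 : EuclideanSpace ℝ (Fin n)) 1)).toReal :=
          ENNReal.toReal_nonneg
        generalize (volume (Metric.ball (0 : EuclideanSpace ℝ (Fin n)) 1)).toReal = Vt at hVt0 ⊢
        rw [ENNReal.toReal_ofReal hVt0, hC]
        have h1 : a ≠ 0 := ha.ne'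
        have h2 : β ≠ 0 := hβ0.ne'
        have h3 : (0:ℝ) < φ ((ρ ^ 2)⁻¹) := hφρ
        generalize hPP : ρ ^ (2 * β) = P at hP ⊢
        generalize hFF : φ ((ρ ^ 2)⁻¹) = F at h3 ⊢
        have h4 : P ≠ 0 := hP.ne'
        have h5 : F ≠ 0 := h3.ne'
        have hkey : 1 / (a * F * P) * (P / (2 * β)) = 1 / (2 * a * β) * (1 / F) := by
          rw [div_mul_div_comm, one_mul, one_div_mul_one_div,
            div_eq_div_iff (by positivity) (by positivity)]
          ring
        rw [hkey]
        ring
end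

section
/- Let n ≥ 2 and let φ : (0,∞) → (0,∞) be nondecreasing, satisfy φ(λ·t) ≤ λ·φ(t) for all λ ≥ 1 and t > 0, and satisfy a·λ^β·φ(t) ≤ φ(λ·t) for all λ ≥ 1 and t ≥ 1, where a > 0 and β ∈ (0,2). Then there exists a constant C > 0, depending only on n, a and β, such that for every ρ ∈ (0,½], every x ∈ ℝⁿ, and all distinct v, w in the open ball B(x,ρ): ∫_{B(x,ρ)} [ φ(|v−w|⁻²)·|v−w|ⁿ ] / [ φ(|v−y|⁻²)·|v−y|ⁿ · φ(|y−w|⁻²)·|y−w|ⁿ ] dy ≤ C / φ((2ρ)⁻²). -/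
open MeasureTheory

open Metric

open MeasureTheory Metric

lemma ball_subset_annuli {E : Type*} [MetricSpace E] (z : E) (R : ℝ) :
    ball z R ⊆ {z} ∪ ⋃ k : ℕ, (ball z (R * 2⁻¹ ^ k) \ ball z (R * 2⁻¹ ^ (k + 1))) := by
  intro y hy
  rw [mem_ball] at hy
  by_cases hyz : y = z
  · exact Set.mem_union_left _ hyz
  · have hd : 0 < dist y z := dist_pos.2 hyz
    have hR : 0 < R := lt_trans hd hy
    have hex : ∃ k : ℕ, R * 2⁻¹ ^ (k + 1) ≤ dist y z := by
      obtain ⟨m, hm⟩ := exists_pow_lt_of_lt_one (div_pos hd hR) (by norm_num : (2⁻¹ : ℝ) < 1)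
      refine ⟨m, ?_⟩
      have : R * 2⁻¹ ^ m < dist y z := by
        rw [mul_comm, ← lt_div_iff₀ hR]; exact hm
      have h2 : R * 2⁻¹ ^ (m + 1) ≤ R * 2⁻¹ ^ m := by
        apply mul_le_mul_of_nonneg_left _ hR.le
        exact pow_le_pow_of_le_one (by norm_num) (by norm_num) (Nat.le_succ m)
      linarith
    set k₀ := Nat.find hex with hk₀
    refine Set.mem_union_right _ (Set.mem_iUnion.2 ⟨k₀, ?_, ?_⟩)
    · rw [mem_ball]
      rcases Nat.eq_zero_or_pos k₀ with h0 | hpos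
      · rw [h0]; simpa using hy
      · obtain ⟨j, hj⟩ := Nat.exists_eq_succ_of_ne_zero hpos.ne'
        have := Nat.find_min hex (m := j) (by omega)
        push_neg at this
        rw [hj]; exact this
    · rw [mem_ball]; push_neg
      exact Nat.find_spec hex

open ENNReal in
lemma riesz_bound (n : ℕ) (hn : 2 ≤ n) (β : ℝ) (hβ0 : 0 < β) (hβn : β ≤ n) :
    ∃ A : ℝ, 0 < A ∧ ∀ R : ℝ, 0 < R → ∀ z : EuclideanSpace ℝ (Fin n),
      (∫⁻ y in Metric.ball z R, ENNReal.ofReal (dist z y ^ (2 * β - n))) ≤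
        ENNReal.ofReal (A * R ^ (2 * β)) := by
  set E := EuclideanSpace ℝ (Fin n)
  haveI : Nontrivial E := by
    apply Module.nontrivial_of_finrank_pos (R := ℝ)
    rw [finrank_euclideanSpace_fin]; omega
  set μB : ℝ≥0∞ := volume (ball (0 : E) 1) with hμB
  have hμBfin : μB ≠ ⊤ := measure_ball_lt_top.ne
  have hμBpos : 0 < μB := measure_ball_pos _ _ one_pos
  set V : ℝ := μB.toReal with hV
  have hV0 : 0 < V := ENNReal.toReal_pos hμBpos.ne' hμBfin
  set q : ℝ := (2 : ℝ) ^ (-(2 * β)) with hq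
  have hq0 : 0 < q := Real.rpow_pos_of_pos two_pos _
  have hq1 : q < 1 := Real.rpow_lt_one_of_one_lt_of_neg one_lt_two (by linarith)
  have h1q : 0 < 1 - q := by linarith
  refine ⟨2 ^ (2 * (n : ℝ)) * V * (1 - q)⁻¹, by positivity, ?_⟩
  intro R hR z
  set s : ℝ := 2 * β - n with hs
  set rk : ℕ → ℝ := fun k => R * 2⁻¹ ^ k with hrk
  have hrkpos : ∀ k, 0 < rk k := fun k => by positivity
  -- rpow form of rk
  have hrk_rpow : ∀ (j : ℕ) (e : ℝ), rk j ^ e = R ^ e * 2 ^ (-(j : ℝ) * e) := by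
    intro j e
    have h1 : (2 : ℝ)⁻¹ ^ j = 2 ^ (-(j : ℝ)) := by
      rw [← Real.rpow_natCast (2 : ℝ)⁻¹ j, ← Real.rpow_neg_one (2:ℝ),
        ← Real.rpow_mul (by norm_num : (0:ℝ) ≤ 2)]
      norm_num
    rw [hrk]
    simp only [h1]
    rw [Real.mul_rpow hR.le (Real.rpow_nonneg (by norm_num) _),
      ← Real.rpow_mul (by norm_num : (0:ℝ) ≤ 2)]
  -- the real per-annulus bound
  have key : ∀ k : ℕ, (2 : ℝ) ^ (n : ℝ) * rk (k + 1) ^ s * rk k ^ n ≤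
      2 ^ (2 * (n : ℝ)) * R ^ (2 * β) * q ^ k := by
    intro k
    have h2 : rk k ^ n = rk k ^ (n : ℝ) := (Real.rpow_natCast _ n).symm
    have hqk : q ^ k = (2 : ℝ) ^ (-(2 * β) * k) := by
      rw [hq, ← Real.rpow_natCast ((2:ℝ) ^ (-(2*β))) k, ← Real.rpow_mul (by norm_num)]
    rw [h2, hrk_rpow, hrk_rpow, hqk]
    push_cast
    have hRs : R ^ s * R ^ (n:ℝ) = R ^ (2*β) := by
      rw [← Real.rpow_add hR]; congr 1; rw [hs]; ring
    have e1 : (2:ℝ) ^ (n:ℝ) * (R ^ s * 2 ^ (-((k:ℝ) + 1) * s)) * (R ^ (n:ℝ) * 2 ^ (-(k:ℝ) * (n:ℝ)))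
        = R ^ (2*β) * 2 ^ ((n:ℝ) + (-((k:ℝ)+1) * s) + (-(k:ℝ) * (n:ℝ))) := by
      rw [Real.rpow_add two_pos, Real.rpow_add two_pos, ← hRs]; ring
    have e2 : (2:ℝ) ^ (2 * (n:ℝ)) * R ^ (2*β) * 2 ^ (-(2*β) * (k:ℝ))
        = R ^ (2*β) * 2 ^ (2*(n:ℝ) + (-(2*β) * (k:ℝ))) := by
      rw [Real.rpow_add two_pos]; ring
    rw [e1, e2]
    apply mul_le_mul_of_nonneg_left _ (Real.rpow_nonneg hR.le _)
    apply Real.rpow_le_rpow_of_exponent_le one_le_two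
    rw [hs]; nlinarith [Nat.cast_nonneg (α := ℝ) k, hβ0]
  set Ak : ℕ → Set E := fun k => ball z (rk k) \ ball z (rk (k + 1)) with hAk
  have hpoint : ∀ k : ℕ, ∀ y ∈ Ak k, ENNReal.ofReal (dist z y ^ s) ≤
      ENNReal.ofReal ((2 : ℝ) ^ (n : ℝ) * rk (k + 1) ^ s) := by
    intro k y hy
    apply ENNReal.ofReal_le_ofReal
    obtain ⟨hy1, hy2⟩ := hy
    rw [mem_ball] at hy1
    rw [mem_ball, not_lt] at hy2
    rw [dist_comm z y]
    rcases le_or_gt 0 s with hs0 | hs0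
    · have hds : dist y z ^ s ≤ rk k ^ s := Real.rpow_le_rpow dist_nonneg hy1.le hs0
      have h2rk : rk k = 2 * rk (k + 1) := by
        show R * 2⁻¹ ^ k = 2 * (R * 2⁻¹ ^ (k + 1)); rw [pow_succ]; ring
      calc dist y z ^ s ≤ rk k ^ s := hds
        _ = 2 ^ s * rk (k + 1) ^ s := by
            rw [h2rk, Real.mul_rpow (by norm_num) (hrkpos _).le]
        _ ≤ 2 ^ (n : ℝ) * rk (k + 1) ^ s := by
            apply mul_le_mul_of_nonneg_right _ (Real.rpow_nonneg (hrkpos _).le _)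
            exact Real.rpow_le_rpow_of_exponent_le one_le_two (by rw [hs]; linarith)
    · calc dist y z ^ s ≤ rk (k + 1) ^ s :=
            Real.rpow_le_rpow_of_nonpos (hrkpos _) hy2 hs0.le
        _ ≤ 2 ^ (n : ℝ) * rk (k + 1) ^ s := by
            apply le_mul_of_one_le_left (Real.rpow_nonneg (hrkpos _).le _)
            exact Real.one_le_rpow one_le_two (Nat.cast_nonneg n)
  have hterm : ∀ k : ℕ, (∫⁻ y in Ak k, ENNReal.ofReal (dist z y ^ s)) ≤
      ENNReal.ofReal (2 ^ (2 * (n : ℝ)) * R ^ (2 * β) * q ^ k) * μB := by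
    intro k
    have hball : volume (Ak k) ≤ ENNReal.ofReal (rk k ^ n) * μB := by
      have h := Measure.addHaar_ball (volume : Measure E) z (hrkpos k).le
      rw [finrank_euclideanSpace_fin] at h
      calc volume (Ak k) ≤ volume (ball z (rk k)) := measure_mono Set.diff_subset
        _ = ENNReal.ofReal (rk k ^ n) * μB := h
    calc (∫⁻ y in Ak k, ENNReal.ofReal (dist z y ^ s))
        ≤ ∫⁻ _ in Ak k, ENNReal.ofReal ((2 : ℝ) ^ (n : ℝ) * rk (k + 1) ^ s) :=
          setLIntegral_mono' (measurableSet_ball.diff measurableSet_ball) (hpoint k)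
      _ = ENNReal.ofReal ((2 : ℝ) ^ (n : ℝ) * rk (k + 1) ^ s) * volume (Ak k) :=
          setLIntegral_const _ _
      _ ≤ ENNReal.ofReal ((2 : ℝ) ^ (n : ℝ) * rk (k + 1) ^ s) *
            (ENNReal.ofReal (rk k ^ n) * μB) := by gcongr
      _ = ENNReal.ofReal ((2 : ℝ) ^ (n : ℝ) * rk (k + 1) ^ s * rk k ^ n) * μB := by
          rw [← mul_assoc, ← ENNReal.ofReal_mul (by positivity)]
      _ ≤ ENNReal.ofReal (2 ^ (2 * (n : ℝ)) * R ^ (2 * β) * q ^ k) * μB :=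
          mul_le_mul_left (ENNReal.ofReal_le_ofReal (key k)) μB
  calc (∫⁻ y in ball z R, ENNReal.ofReal (dist z y ^ s))
      ≤ ∫⁻ y in ({z} ∪ ⋃ k, Ak k), ENNReal.ofReal (dist z y ^ s) :=
        lintegral_mono_set (ball_subset_annuli z R)
    _ ≤ (∫⁻ y in ({z} : Set E), ENNReal.ofReal (dist z y ^ s)) +
          ∫⁻ y in ⋃ k, Ak k, ENNReal.ofReal (dist z y ^ s) := lintegral_union_le _ _ _
    _ = ∫⁻ y in ⋃ k, Ak k, ENNReal.ofReal (dist z y ^ s) := by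
        rw [setLIntegral_measure_zero _ _ (measure_singleton z), zero_add]
    _ ≤ ∑' k, ∫⁻ y in Ak k, ENNReal.ofReal (dist z y ^ s) := lintegral_iUnion_le _ _
    _ ≤ ∑' k : ℕ, ENNReal.ofReal (2 ^ (2 * (n : ℝ)) * R ^ (2 * β) * q ^ k) * μB :=
        ENNReal.tsum_le_tsum hterm
    _ = ENNReal.ofReal (2 ^ (2 * (n : ℝ)) * R ^ (2 * β)) *
          (∑' k : ℕ, (ENNReal.ofReal q) ^ k) * μB := by
        rw [ENNReal.tsum_mul_right, ← ENNReal.tsum_mul_left]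
        congr 1
        refine tsum_congr fun k => ?_
        rw [← ENNReal.ofReal_pow hq0.le, ← ENNReal.ofReal_mul (by positivity)]
    _ = ENNReal.ofReal (2 ^ (2 * (n : ℝ)) * R ^ (2 * β)) *
          ENNReal.ofReal ((1 - q)⁻¹) * ENNReal.ofReal V := by
        rw [ENNReal.tsum_geometric, ENNReal.ofReal_inv_of_pos h1q, ENNReal.ofReal_sub _ hq0.le,
          ENNReal.ofReal_one, ENNReal.ofReal_toReal hμBfin]
    _ = ENNReal.ofReal (2 ^ (2 * (n : ℝ)) * R ^ (2 * β) * (1 - q)⁻¹ * V) := by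
        rw [← ENNReal.ofReal_mul (by positivity), ← ENNReal.ofReal_mul (by positivity)]
    _ ≤ ENNReal.ofReal (2 ^ (2 * (n : ℝ)) * V * (1 - q)⁻¹ * R ^ (2 * β)) := by
        apply ENNReal.ofReal_le_ofReal
        apply le_of_eq; ring

set_option maxHeartbeats 1000000 in
open ENNReal Metric in
/-- The analytic core of Lemma 4.1: a uniform bound, with constant depending
only on `n`, `a`, `β`, for the 3G-type integral over a ball. -/
theorem threeG_integral_bound (n : ℕ) (hn : 2 ≤ n) (a β : ℝ)
    (ha : 0 < a) (hβ : β ∈ Set.Ioo (0 : ℝ) 2) :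
    ∃ C : ℝ, 0 < C ∧ ∀ φ : ℝ → ℝ,
      (∀ t : ℝ, 0 < t → 0 < φ t) →
      MonotoneOn φ (Set.Ioi (0 : ℝ)) →
      (∀ lam t : ℝ, 1 ≤ lam → 0 < t → φ (lam * t) ≤ lam * φ t) →
      (∀ lam t : ℝ, 1 ≤ lam → 1 ≤ t → a * lam ^ β * φ t ≤ φ (lam * t)) →
      ∀ ρ : ℝ, ρ ∈ Set.Ioc (0 : ℝ) (1 / 2) →
      ∀ x v w : EuclideanSpace ℝ (Fin n),
        v ∈ Metric.ball x ρ → w ∈ Metric.ball x ρ → v ≠ w →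
        (∫⁻ y in Metric.ball x ρ,
            ENNReal.ofReal
              (φ ((dist v w ^ 2)⁻¹) * dist v w ^ n /
                (φ ((dist v y ^ 2)⁻¹) * dist v y ^ n *
                  (φ ((dist y w ^ 2)⁻¹) * dist y w ^ n)))) ≤
          ENNReal.ofReal (C / φ (((2 * ρ) ^ 2)⁻¹)) := by
  obtain ⟨hβ0, hβ2⟩ := hβ
  have hn' : (2 : ℝ) ≤ (n : ℝ) := by exact_mod_cast hn
  obtain ⟨A, hA0, hA⟩ := riesz_bound n hn β hβ0 (by linarith)
  refine ⟨2 ^ (n + 1) * A / a, by positivity, ?_⟩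
  intro φ hφpos hφmono hφup hφlow ρ hρ x v w hv hw hvw
  obtain ⟨hρ0, hρhalf⟩ := hρ
  have h2ρ : (0 : ℝ) < 2 * ρ := by linarith
  set s : ℝ := 2 * β - n with hs
  set F : ℝ → ℝ := fun t => φ ((t ^ 2)⁻¹) * t ^ n with hF
  have hφ₀ : 0 < φ (((2 * ρ) ^ 2)⁻¹) := hφpos _ (by positivity)
  set φ₀ := φ (((2 * ρ) ^ 2)⁻¹) with hφ₀def
  set K : ℝ := (2 * ρ) ^ (-(2 * β)) / (a * φ₀) with hK
  have hK0 : 0 < K := by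
    rw [hK]; exact div_pos (Real.rpow_pos_of_pos h2ρ _) (by positivity)
  have hFpos : ∀ t : ℝ, 0 < t → 0 < F t := fun t ht =>
    mul_pos (hφpos _ (by positivity)) (pow_pos ht n)
  -- monotonicity of F on (0, ∞)
  have hFmono : ∀ t₁ t₂ : ℝ, 0 < t₁ → t₁ ≤ t₂ → F t₁ ≤ F t₂ := by
    intro t₁ t₂ ht₁ h12
    have ht₂ : 0 < t₂ := lt_of_lt_of_le ht₁ h12
    have hφ2 : 0 < φ ((t₂ ^ 2)⁻¹) := hφpos _ (by positivity)
    have hlam : (1 : ℝ) ≤ t₂ ^ 2 / t₁ ^ 2 := by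
      rw [le_div_iff₀ (by positivity)]; nlinarith
    have harg : (t₂ ^ 2 / t₁ ^ 2) * (t₂ ^ 2)⁻¹ = (t₁ ^ 2)⁻¹ := by field_simp
    have h1 : φ ((t₁ ^ 2)⁻¹) ≤ (t₂ ^ 2 / t₁ ^ 2) * φ ((t₂ ^ 2)⁻¹) := by
      have := hφup (t₂ ^ 2 / t₁ ^ 2) ((t₂ ^ 2)⁻¹) hlam (by positivity)
      rwa [harg] at this
    obtain ⟨m, rfl⟩ : ∃ m, n = m + 2 := ⟨n - 2, by omega⟩
    have e1 : (t₂ ^ 2 / t₁ ^ 2) * φ ((t₂ ^ 2)⁻¹) * t₁ ^ (m + 2)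
        = φ ((t₂ ^ 2)⁻¹) * t₂ ^ 2 * t₁ ^ m := by
      field_simp [pow_add]; ring
    have e2 : φ ((t₂ ^ 2)⁻¹) * t₂ ^ (m + 2) = φ ((t₂ ^ 2)⁻¹) * t₂ ^ 2 * t₂ ^ m := by ring
    calc F t₁ = φ ((t₁ ^ 2)⁻¹) * t₁ ^ (m + 2) := rfl
      _ ≤ (t₂ ^ 2 / t₁ ^ 2) * φ ((t₂ ^ 2)⁻¹) * t₁ ^ (m + 2) :=
          mul_le_mul_of_nonneg_right h1 (by positivity)
      _ = φ ((t₂ ^ 2)⁻¹) * t₂ ^ 2 * t₁ ^ m := e1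
      _ ≤ φ ((t₂ ^ 2)⁻¹) * t₂ ^ 2 * t₂ ^ m := by
          gcongr <;> first | exact ht₁.le | exact h12
      _ = F t₂ := e2.symm
  -- doubling for F
  have hFdouble : ∀ m : ℝ, 0 < m → F (2 * m) ≤ 2 ^ n * F m := by
    intro m hm
    have h1 : φ (((2 * m) ^ 2)⁻¹) ≤ φ ((m ^ 2)⁻¹) := by
      apply hφmono (Set.mem_Ioi.2 (by positivity)) (Set.mem_Ioi.2 (by positivity))
      apply inv_anti₀ (by positivity)
      nlinarith
    calc F (2 * m) = φ (((2 * m) ^ 2)⁻¹) * (2 ^ n * m ^ n) := by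
          rw [hF]; simp only [mul_pow]
      _ ≤ φ ((m ^ 2)⁻¹) * (2 ^ n * m ^ n) :=
          mul_le_mul_of_nonneg_right h1 (by positivity)
      _ = 2 ^ n * F m := by rw [hF]; ring
  -- lower scaling bound for 1/F
  have hFlow : ∀ u : ℝ, 0 < u → u < 2 * ρ → (F u)⁻¹ ≤ K * u ^ s := by
    intro u hu hu2
    have hbase : (1 : ℝ) ≤ ((2 * ρ) ^ 2)⁻¹ := by
      rw [one_le_inv_iff₀]
      constructor
      · positivity
      · nlinarith
    have hlam : (1 : ℝ) ≤ (2 * ρ) ^ 2 / u ^ 2 := by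
      rw [le_div_iff₀ (by positivity)]; nlinarith
    have harg : ((2 * ρ) ^ 2 / u ^ 2) * (((2 * ρ) ^ 2)⁻¹) = (u ^ 2)⁻¹ := by field_simp
    have h1 : a * ((2 * ρ) ^ 2 / u ^ 2) ^ β * φ₀ ≤ φ ((u ^ 2)⁻¹) := by
      have := hφlow ((2 * ρ) ^ 2 / u ^ 2) (((2 * ρ) ^ 2)⁻¹) hlam hbase
      rwa [harg] at this
    have hlamβ : (((2 * ρ) ^ 2 / u ^ 2 : ℝ)) ^ β = (2 * ρ) ^ (2 * β) * u ^ (-(2 * β)) := by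
      rw [Real.div_rpow (by positivity) (by positivity),
        ← Real.rpow_natCast (2 * ρ) 2, ← Real.rpow_natCast u 2,
        ← Real.rpow_mul h2ρ.le, ← Real.rpow_mul hu.le]
      push_cast
      rw [Real.rpow_neg hu.le, div_eq_mul_inv]
    set L : ℝ := a * φ₀ * ((2 * ρ) ^ (2 * β) * u ^ (-(2 * β))) * u ^ n with hL
    have hLpos : 0 < L := by
      rw [hL]
      have := Real.rpow_pos_of_pos h2ρ (2 * β)
      have := Real.rpow_pos_of_pos hu (-(2 * β))
      positivity
    have hLF : L ≤ F u := by
      calc L = a * ((2 * ρ) ^ 2 / u ^ 2) ^ β * φ₀ * u ^ n := by rw [hL, hlamβ]; ring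
        _ ≤ φ ((u ^ 2)⁻¹) * u ^ n := mul_le_mul_of_nonneg_right h1 (by positivity)
        _ = F u := rfl
    have hinv : (F u)⁻¹ ≤ L⁻¹ := by gcongr
    have hone : (K * u ^ s) * L = 1 := by
      have hxy : (2 * ρ) ^ (-(2 * β)) * (2 * ρ) ^ (2 * β) = 1 := by
        rw [← Real.rpow_add h2ρ]; simp
      have hupq : u ^ s * (u ^ (-(2 * β)) * u ^ ((n : ℝ))) = 1 := by
        rw [← Real.rpow_add hu, ← Real.rpow_add hu, hs]
        ring_nf
        exact Real.rpow_zero u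
      have hun : (u : ℝ) ^ n = u ^ ((n : ℝ)) := (Real.rpow_natCast u n).symm
      have haφ : (a * φ₀) ≠ 0 := by positivity
      calc (K * u ^ s) * L
          = ((2 * ρ) ^ (-(2 * β)) * (2 * ρ) ^ (2 * β)) *
              (u ^ s * (u ^ (-(2 * β)) * u ^ ((n : ℝ)))) * ((a * φ₀) / (a * φ₀)) := by
            rw [hK, hL, hun]; ring
        _ = 1 := by rw [hxy, hupq, div_self haφ]; ring
    calc (F u)⁻¹ ≤ L⁻¹ := hinv
      _ = K * u ^ s := inv_eq_of_mul_eq_one_left hone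
  -- the master pointwise bound
  have hmaster : ∀ y ∈ Metric.ball x ρ,
      F (dist v w) / (F (dist v y) * F (dist y w)) ≤
        2 ^ n * K * dist v y ^ s + 2 ^ n * K * dist y w ^ s := by
    intro y hy
    have hRHSnn : (0 : ℝ) ≤ 2 ^ n * K * dist v y ^ s + 2 ^ n * K * dist y w ^ s := by
      have := Real.rpow_nonneg (dist_nonneg (x := v) (y := y)) s
      have := Real.rpow_nonneg (dist_nonneg (x := y) (y := w)) s
      positivity
    by_cases hyv : y = v
    · have hzero : F (dist v y) = 0 := by
        rw [hyv, dist_self, hF]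
        simp [zero_pow (by omega : n ≠ 0)]
      rw [hzero, zero_mul, _root_.div_zero]
      exact hRHSnn
    by_cases hyw : y = w
    · have hzero : F (dist y w) = 0 := by
        rw [hyw, dist_self, hF]
        simp [zero_pow (by omega : n ≠ 0)]
      rw [hzero, mul_zero, _root_.div_zero]
      exact hRHSnn
    have hr0 : 0 < dist v y := dist_pos.2 (fun h => hyv h.symm)
    have ht0 : 0 < dist y w := dist_pos.2 hyw
    have hd0 : 0 < dist v w := dist_pos.2 hvw
    have hr2 : dist v y < 2 * ρ := by
      have h1 := mem_ball.1 hv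
      have h2 := mem_ball.1 hy
      calc dist v y ≤ dist v x + dist x y := dist_triangle _ _ _
        _ < ρ + ρ := add_lt_add (by rwa [dist_comm] at h1) (by rwa [dist_comm] at h2)
        _ = 2 * ρ := by ring
    have ht2 : dist y w < 2 * ρ := by
      have h1 := mem_ball.1 hy
      have h2 := mem_ball.1 hw
      calc dist y w ≤ dist y x + dist x w := dist_triangle _ _ _
        _ < ρ + ρ := add_lt_add h1 (by rwa [dist_comm] at h2)
        _ = 2 * ρ := by ring
    have htri : dist v w ≤ dist v y + dist y w := dist_triangle v y w
    have hFr := hFpos _ hr0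
    have hFt := hFpos _ ht0
    rcases le_total (dist v y) (dist y w) with hc | hc
    · have h1 : F (dist v w) ≤ 2 ^ n * F (dist y w) :=
        le_trans (hFmono _ _ hd0 (by linarith)) (hFdouble _ ht0)
      have e : (2 ^ n * F (dist y w)) / (F (dist v y) * F (dist y w))
          = 2 ^ n * (F (dist v y))⁻¹ := by
        field_simp
      calc F (dist v w) / (F (dist v y) * F (dist y w))
          ≤ (2 ^ n * F (dist y w)) / (F (dist v y) * F (dist y w)) :=
            (div_le_div_iff_of_pos_right (by positivity)).2 h1
        _ = 2 ^ n * (F (dist v y))⁻¹ := e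
        _ ≤ 2 ^ n * (K * dist v y ^ s) :=
            mul_le_mul_of_nonneg_left (hFlow _ hr0 hr2) (by positivity)
        _ ≤ 2 ^ n * K * dist v y ^ s + 2 ^ n * K * dist y w ^ s := by
            have h2 : (0 : ℝ) ≤ 2 ^ n * K * dist y w ^ s := by
              have := Real.rpow_nonneg (dist_nonneg (x := y) (y := w)) s
              positivity
            nlinarith [h2]
    · have h1 : F (dist v w) ≤ 2 ^ n * F (dist v y) :=
        le_trans (hFmono _ _ hd0 (by linarith)) (hFdouble _ hr0)
      have e : (2 ^ n * F (dist v y)) / (F (dist v y) * F (dist y w))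
          = 2 ^ n * (F (dist y w))⁻¹ := by
        field_simp
      calc F (dist v w) / (F (dist v y) * F (dist y w))
          ≤ (2 ^ n * F (dist v y)) / (F (dist v y) * F (dist y w)) :=
            (div_le_div_iff_of_pos_right (by positivity)).2 h1
        _ = 2 ^ n * (F (dist y w))⁻¹ := e
        _ ≤ 2 ^ n * (K * dist y w ^ s) :=
            mul_le_mul_of_nonneg_left (hFlow _ ht0 ht2) (by positivity)
        _ ≤ 2 ^ n * K * dist v y ^ s + 2 ^ n * K * dist y w ^ s := by
            have h2 : (0 : ℝ) ≤ 2 ^ n * K * dist v y ^ s := by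
              have := Real.rpow_nonneg (dist_nonneg (x := v) (y := y)) s
              positivity
            nlinarith [h2]
  -- ball inclusions
  have hsub_v : Metric.ball x ρ ⊆ Metric.ball v (2 * ρ) := by
    intro y hy
    rw [mem_ball] at *
    have h1 := mem_ball.1 hv
    calc dist y v ≤ dist y x + dist x v := dist_triangle _ _ _
      _ < ρ + ρ := add_lt_add hy (by rwa [dist_comm] at h1)
      _ = 2 * ρ := by ring
  have hsub_w : Metric.ball x ρ ⊆ Metric.ball w (2 * ρ) := by
    intro y hy
    rw [mem_ball] at *
    have h1 := mem_ball.1 hw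
    calc dist y w ≤ dist y x + dist x w := dist_triangle _ _ _
      _ < ρ + ρ := add_lt_add hy (by rwa [dist_comm] at h1)
      _ = 2 * ρ := by ring
  have hmeas1 : Measurable fun y : EuclideanSpace ℝ (Fin n) =>
      ENNReal.ofReal (2 ^ n * K * dist v y ^ s) :=
    (((measurable_const.dist measurable_id).pow_const s).const_mul _).ennreal_ofReal
  have h2nK : (0 : ℝ) ≤ 2 ^ n * K := by positivity
  have hI1 : (∫⁻ y in Metric.ball x ρ, ENNReal.ofReal (2 ^ n * K * dist v y ^ s)) ≤
      ENNReal.ofReal (2 ^ n * K) * ENNReal.ofReal (A * (2 * ρ) ^ (2 * β)) := by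
    calc (∫⁻ y in Metric.ball x ρ, ENNReal.ofReal (2 ^ n * K * dist v y ^ s))
        = ∫⁻ y in Metric.ball x ρ,
            ENNReal.ofReal (2 ^ n * K) * ENNReal.ofReal (dist v y ^ s) := by
          apply lintegral_congr
          intro y
          rw [← ENNReal.ofReal_mul h2nK]
      _ = ENNReal.ofReal (2 ^ n * K) *
            ∫⁻ y in Metric.ball x ρ, ENNReal.ofReal (dist v y ^ s) :=
          lintegral_const_mul' _ _ ENNReal.ofReal_ne_top
      _ ≤ ENNReal.ofReal (2 ^ n * K) * ENNReal.ofReal (A * (2 * ρ) ^ (2 * β)) := by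
          apply mul_le_mul_right
          calc (∫⁻ y in Metric.ball x ρ, ENNReal.ofReal (dist v y ^ s))
              ≤ ∫⁻ y in Metric.ball v (2 * ρ), ENNReal.ofReal (dist v y ^ s) :=
                lintegral_mono_set hsub_v
            _ ≤ ENNReal.ofReal (A * (2 * ρ) ^ (2 * β)) := hA (2 * ρ) h2ρ v
  have hI2 : (∫⁻ y in Metric.ball x ρ, ENNReal.ofReal (2 ^ n * K * dist y w ^ s)) ≤
      ENNReal.ofReal (2 ^ n * K) * ENNReal.ofReal (A * (2 * ρ) ^ (2 * β)) := by
    calc (∫⁻ y in Metric.ball x ρ, ENNReal.ofReal (2 ^ n * K * dist y w ^ s))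
        = ∫⁻ y in Metric.ball x ρ,
            ENNReal.ofReal (2 ^ n * K) * ENNReal.ofReal (dist w y ^ s) := by
          apply lintegral_congr
          intro y
          rw [← ENNReal.ofReal_mul h2nK, dist_comm y w]
      _ = ENNReal.ofReal (2 ^ n * K) *
            ∫⁻ y in Metric.ball x ρ, ENNReal.ofReal (dist w y ^ s) :=
          lintegral_const_mul' _ _ ENNReal.ofReal_ne_top
      _ ≤ ENNReal.ofReal (2 ^ n * K) * ENNReal.ofReal (A * (2 * ρ) ^ (2 * β)) := by
          apply mul_le_mul_right
          calc (∫⁻ y in Metric.ball x ρ, ENNReal.ofReal (dist w y ^ s))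
              ≤ ∫⁻ y in Metric.ball w (2 * ρ), ENNReal.ofReal (dist w y ^ s) :=
                lintegral_mono_set hsub_w
            _ ≤ ENNReal.ofReal (A * (2 * ρ) ^ (2 * β)) := hA (2 * ρ) h2ρ w
  -- final combination
  have hfinal : (2 : ℝ) * (2 ^ n * K * (A * (2 * ρ) ^ (2 * β))) = 2 ^ (n + 1) * A / a / φ₀ := by
    have hxy : (2 * ρ) ^ (-(2 * β)) * (2 * ρ) ^ (2 * β) = 1 := by
      rw [← Real.rpow_add h2ρ]; simp
    calc (2 : ℝ) * (2 ^ n * K * (A * (2 * ρ) ^ (2 * β)))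
        = 2 * 2 ^ n * A * ((2 * ρ) ^ (-(2 * β)) * (2 * ρ) ^ (2 * β)) / (a * φ₀) := by
          rw [hK]; ring
      _ = 2 * 2 ^ n * A / (a * φ₀) := by rw [hxy]; ring
      _ = 2 ^ (n + 1) * A / a / φ₀ := by rw [pow_succ]; ring
  calc (∫⁻ y in Metric.ball x ρ,
          ENNReal.ofReal
            (φ ((dist v w ^ 2)⁻¹) * dist v w ^ n /
              (φ ((dist v y ^ 2)⁻¹) * dist v y ^ n *
                (φ ((dist y w ^ 2)⁻¹) * dist y w ^ n))))
      ≤ ∫⁻ y in Metric.ball x ρ,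
          (ENNReal.ofReal (2 ^ n * K * dist v y ^ s) +
            ENNReal.ofReal (2 ^ n * K * dist y w ^ s)) := by
        apply setLIntegral_mono' measurableSet_ball
        intro y hy
        have h := hmaster y hy
        simp only [hF] at h
        rw [← ENNReal.ofReal_add (by positivity) (by positivity)]
        exact ENNReal.ofReal_le_ofReal h
    _ = (∫⁻ y in Metric.ball x ρ, ENNReal.ofReal (2 ^ n * K * dist v y ^ s)) +
          ∫⁻ y in Metric.ball x ρ, ENNReal.ofReal (2 ^ n * K * dist y w ^ s) :=
        lintegral_add_left hmeas1 _
    _ ≤ ENNReal.ofReal (2 ^ n * K) * ENNReal.ofReal (A * (2 * ρ) ^ (2 * β)) +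
          ENNReal.ofReal (2 ^ n * K) * ENNReal.ofReal (A * (2 * ρ) ^ (2 * β)) :=
        add_le_add hI1 hI2
    _ = ENNReal.ofReal (2 * (2 ^ n * K * (A * (2 * ρ) ^ (2 * β)))) := by
        rw [← ENNReal.ofReal_mul h2nK, ← two_mul, ← ENNReal.ofReal_ofNat 2,
          ← ENNReal.ofReal_mul (by norm_num)]
    _ = ENNReal.ofReal (2 ^ (n + 1) * A / a / φ₀) := by rw [hfinal]
end
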